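/- Suppose there exists ε > 0 such that (Σ_{k=1}^{T} max_{|ξ| ≤ ε} F_k(ξ)) / ε^p < κ^p / p. Then there exists u ∈ H such that -(φ_p(u(k+1) - u(k)) - φ_p(u(k) - u(k-1))) = f(k, u(k)) for all k ∈ {1, ..., T}, and max_{k ∈ {1,...,T}} |u(k)| < ε. -/

import Mathlib

open Real Filter

private lemma abs_rpow_hasDerivAt {p : ℝ} (hp : 1 < p) (x : ℝ) :
    HasDerivAt (fun y : ℝ => |y| ^ p) (p * |x| ^ (p - 2) * x) x := by
  rcases lt_trichotomy x 0 with hx | rfl | hx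
  · have h1 : HasDerivAt (fun y : ℝ => (-y) ^ p) (p * (-x) ^ (p - 1) * (-1)) x := by
      have h0 : HasDerivAt (fun y : ℝ => -y) (-1 : ℝ) x := by
        exact hasDerivAt_neg' (x := x)
      exact (Real.hasDerivAt_rpow_const (Or.inl (by linarith))).comp x h0
    have h2 : (fun y : ℝ => (-y) ^ p) =ᶠ[nhds x] fun y : ℝ => |y| ^ p := by
      filter_upwards [Iio_mem_nhds hx] with y hy
      rw [abs_of_neg hy]
    have h3 : p * (-x) ^ (p - 1) * (-1) = p * |x| ^ (p - 2) * x := by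
      rw [abs_of_neg hx]
      have : (-x) ^ (p - 1) = (-x) ^ (p - 2) * (-x) := by
        rw [← Real.rpow_add_one (by linarith : -x ≠ 0)]
        ring_nf
      rw [this]; ring
    rw [← h3]
    exact h1.congr_of_eventuallyEq h2.symm
  · -- x = 0
    have hd : p * |(0:ℝ)| ^ (p - 2) * 0 = 0 := by ring
    rw [hd]
    rw [hasDerivAt_iff_tendsto_slope]
    have hb : Tendsto (fun y : ℝ => |y| ^ (p - 1)) (nhdsWithin 0 {(0:ℝ)}ᶜ) (nhds 0) := by
      have hc : ContinuousAt (fun y : ℝ => |y| ^ (p - 1)) 0 := by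
        exact (Real.continuousAt_rpow_const _ _ (Or.inr (by linarith))).comp
          continuous_abs.continuousAt
      have := hc.tendsto.mono_left (nhdsWithin_le_nhds (s := {(0:ℝ)}ᶜ))
      simpa [Real.zero_rpow (by linarith : p - 1 ≠ 0)] using this
    apply squeeze_zero_norm' _ hb
    filter_upwards [self_mem_nhdsWithin] with y hy
    have hy0 : y ≠ 0 := hy
    have h1 : slope (fun y : ℝ => |y| ^ p) 0 y = |y| ^ p / y := by
      simp only [slope, vsub_eq_sub, sub_zero, abs_zero,
        Real.zero_rpow (by linarith : p ≠ 0), smul_eq_mul]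
      ring
    rw [h1]
    have h2 : ‖|y| ^ p / y‖ = |y| ^ p / |y| := by
      rw [norm_div, Real.norm_eq_abs, Real.norm_eq_abs,
        abs_of_nonneg (Real.rpow_nonneg (abs_nonneg y) p)]
    rw [h2, div_le_iff₀ (abs_pos.mpr hy0),
      ← Real.rpow_add_one (by simpa using hy0 : |y| ≠ 0)]
    ring_nf
    exact le_refl _
  · have h1 : HasDerivAt (fun y : ℝ => y ^ p) (p * x ^ (p - 1)) x :=
      Real.hasDerivAt_rpow_const (Or.inl (by linarith))
    have h2 : (fun y : ℝ => y ^ p) =ᶠ[nhds x] fun y : ℝ => |y| ^ p := by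
      filter_upwards [Ioi_mem_nhds hx] with y hy
      rw [abs_of_pos hy]
    have h3 : p * x ^ (p - 1) = p * |x| ^ (p - 2) * x := by
      rw [abs_of_pos hx]
      rw [show p - 1 = p - 2 + 1 by ring, Real.rpow_add_one (by linarith : x ≠ 0)]
      ring
    rw [← h3]
    exact h1.congr_of_eventuallyEq h2.symm

private lemma sum_pow_le {p : ℝ} (hp : 1 < p) (s : Finset ℕ) (a : ℕ → ℝ)
    (ha : ∀ m ∈ s, 0 ≤ a m) :
    (∑ m ∈ s, a m) ^ p ≤ (s.card : ℝ) ^ (p - 1) * ∑ m ∈ s, a m ^ p := by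
  rcases s.eq_empty_or_nonempty with rfl | hne
  · simp [Real.zero_rpow (by linarith : p ≠ 0)]
  · have hn : (0:ℝ) < s.card := by exact_mod_cast Finset.card_pos.mpr hne
    have hw : ∑ _i ∈ s, ((s.card : ℝ))⁻¹ = 1 := by
      rw [Finset.sum_const, nsmul_eq_mul]; field_simp
    have key := Real.rpow_arith_mean_le_arith_mean_rpow s (fun _ => ((s.card:ℝ))⁻¹) a
      (fun i _ => by positivity) hw ha hp.le
    rw [← Finset.mul_sum, Real.mul_rpow (by positivity) (Finset.sum_nonneg ha),
      ← Finset.mul_sum] at key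
    have h2 := mul_le_mul_of_nonneg_left key (Real.rpow_pos_of_pos hn p).le
    have hnp : ((s.card:ℝ)) ^ p ≠ 0 := (Real.rpow_pos_of_pos hn p).ne'
    calc (∑ m ∈ s, a m) ^ p
        = (s.card:ℝ) ^ p * (((s.card:ℝ))⁻¹ ^ p * (∑ m ∈ s, a m) ^ p) := by
          rw [Real.inv_rpow hn.le, ← mul_assoc, mul_inv_cancel₀ hnp, one_mul]
      _ ≤ (s.card:ℝ) ^ p * (((s.card:ℝ))⁻¹ * ∑ m ∈ s, a m ^ p) := h2
      _ = (s.card:ℝ) ^ (p-1) * ∑ m ∈ s, a m ^ p := by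
          rw [Real.rpow_sub hn, Real.rpow_one]; ring

private lemma kappa_min {T : ℕ} (hT : 2 ≤ T) {p : ℝ} (hp : 1 < p) {k : ℕ}
    (hk1 : 1 ≤ k) (hk2 : k ≤ T) :
    ((if Even T
      then ((2 / (T : ℝ)) ^ (p - 1) + (2 / ((T : ℝ) + 2)) ^ (p - 1)) ^ (1 / p)
      else 2 / ((T : ℝ) + 1) ^ ((p - 1) / p)) : ℝ) ^ p
      ≤ (k : ℝ) ^ (1 - p) + ((T : ℝ) + 1 - k) ^ (1 - p) := by
  have hp0 : (0:ℝ) < p := by linarith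
  set S : ℝ := (T : ℝ) + 1 with hS
  have hS3 : (3:ℝ) ≤ S := by
    have : (2:ℝ) ≤ (T:ℝ) := by exact_mod_cast hT
    simp only [hS]; linarith
  set h : ℝ → ℝ := fun t => t ^ (1 - p) + (S - t) ^ (1 - p) with hh
  have hd : ∀ t : ℝ, 0 < t → t < S →
      HasDerivAt h ((1 - p) * t ^ (1 - p - 1) + ((1 - p) * (S - t) ^ (1 - p - 1)) * (-1)) t := by
    intro t ht1 ht2
    have h1 : HasDerivAt (fun t : ℝ => t ^ (1 - p)) ((1 - p) * t ^ (1 - p - 1)) t :=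
      Real.hasDerivAt_rpow_const (Or.inl ht1.ne')
    have h0 : HasDerivAt (fun x : ℝ => S - x) (-1 : ℝ) t := by
      simpa using (hasDerivAt_id t).const_sub S
    have h2 : HasDerivAt (fun x : ℝ => (S - x) ^ (1 - p))
        (((1 - p) * (S - t) ^ (1 - p - 1)) * (-1)) t :=
      (Real.hasDerivAt_rpow_const (Or.inl (by linarith : S - t ≠ 0))).comp t h0
    exact h1.add h2
  have hanti : AntitoneOn h (Set.Icc 1 (S / 2)) := by
    apply antitoneOn_of_deriv_nonpos (convex_Icc 1 (S / 2))
    · intro t ht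
      exact (hd t (by linarith [ht.1]) (by linarith [ht.2] : t < S)).continuousAt.continuousWithinAt
    · intro t ht
      rw [interior_Icc] at ht
      exact (hd t (by linarith [ht.1]) (by linarith [ht.2])).differentiableAt.differentiableWithinAt
    · intro t ht
      rw [interior_Icc] at ht
      obtain ⟨ht1, ht2⟩ := ht
      rw [(hd t (by linarith) (by linarith)).deriv]
      have hts : t ≤ S - t := by linarith
      have hr : (S - t) ^ (1 - p - 1) ≤ t ^ (1 - p - 1) :=
        Real.rpow_le_rpow_of_nonpos (by linarith) hts (by linarith)
      nlinarith [hr]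
  set m : ℕ := (T + 1) / 2 with hm
  have hm1 : 1 ≤ m := by omega
  have hm2 : 2 * m ≤ T + 1 := by omega
  have hmIcc : (m : ℝ) ∈ Set.Icc 1 (S / 2) := by
    constructor
    · exact_mod_cast hm1
    · have : (2 * m : ℝ) ≤ (T : ℝ) + 1 := by exact_mod_cast hm2
      simp only [hS]; push_cast at this ⊢; linarith
  set a : ℕ := min k (T + 1 - k) with ha
  have ha1 : 1 ≤ a := by omega
  have ha2 : 2 * a ≤ T + 1 := by omega
  have ham : a ≤ m := by omega
  have haIcc : (a : ℝ) ∈ Set.Icc 1 (S / 2) := by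
    constructor
    · exact_mod_cast ha1
    · have : (2 * a : ℝ) ≤ (T : ℝ) + 1 := by exact_mod_cast ha2
      simp only [hS]; push_cast at this ⊢; linarith
  have hkey : h m ≤ h a := hanti haIcc hmIcc (by exact_mod_cast ham)
  have hRHS : h a = (k : ℝ) ^ (1 - p) + (S - (k : ℝ)) ^ (1 - p) := by
    rcases le_total k (T + 1 - k) with hc | hc
    · have hak : a = k := min_eq_left hc
      rw [hh]; simp only [hak]
    · have hak : a = T + 1 - k := min_eq_right hc
      have hca : (a : ℝ) = S - (k : ℝ) := by
        rw [hak, hS]; push_cast [Nat.cast_sub (by omega : k ≤ T + 1)]; ring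
      have hca2 : S - (a : ℝ) = (k : ℝ) := by rw [hca]; ring
      rw [hh]; simp only [hca, hca2]
      ring
  rw [← hRHS]
  refine le_trans (le_of_eq ?_) hkey
  by_cases hTe : Even T
  · rw [if_pos hTe]
    obtain ⟨n, hn⟩ := hTe
    have hn1 : 1 ≤ n := by omega
    have hmn : m = n := by omega
    have hn0 : (0:ℝ) < n := by exact_mod_cast hn1
    have hTc : (T : ℝ) = 2 * n := by
      have : T = 2 * n := by omega
      exact_mod_cast this
    have hX : (0:ℝ) ≤ (2 / (T : ℝ)) ^ (p - 1) + (2 / ((T : ℝ) + 2)) ^ (p - 1) := by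
      have h1 : (0:ℝ) < 2 / (T:ℝ) := by rw [hTc]; positivity
      have h2 : (0:ℝ) < 2 / ((T:ℝ) + 2) := by rw [hTc]; positivity
      positivity
    rw [← Real.rpow_mul hX, one_div_mul_cancel hp0.ne', Real.rpow_one]
    have c1 : (2:ℝ) / (T:ℝ) = ((n:ℝ))⁻¹ := by rw [hTc]; field_simp
    have c2 : (2:ℝ) / ((T:ℝ) + 2) = ((n:ℝ) + 1)⁻¹ := by rw [hTc]; field_simp
    have c3 : S - (m:ℝ) = (n:ℝ) + 1 := by rw [hS, hTc, hmn]; ring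
    have d1 : ∀ x : ℝ, 0 < x → (x⁻¹) ^ (p - 1) = x ^ (1 - p) := by
      intro x hx
      rw [Real.inv_rpow hx.le, ← Real.rpow_neg hx.le, neg_sub]
    rw [hh]; simp only [c3]
    rw [c1, c2, hmn, d1 _ hn0, d1 _ (by linarith)]
  · rw [if_neg hTe]
    obtain ⟨n, hn⟩ := Nat.not_even_iff_odd.mp hTe
    have hn1 : 1 ≤ n := by omega
    have hmn : m = n + 1 := by omega
    have hTc : (T : ℝ) = 2 * n + 1 := by exact_mod_cast hn
    have hS2 : S = 2 * ((n:ℝ) + 1) := by rw [hS, hTc]; ring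
    have hS0 : (0:ℝ) < S := by linarith
    have hn0 : (0:ℝ) < (n:ℝ) + 1 := by positivity
    have hmc : (m:ℝ) = (n:ℝ) + 1 := by rw [hmn]; push_cast; ring
    have hsm : S - (m:ℝ) = (n:ℝ) + 1 := by rw [hmc, hS2]; ring
    simp only [hh]
    rw [show S - (m:ℝ) = (n:ℝ) + 1 from hsm, hmc]
    rw [Real.div_rpow (by norm_num) (Real.rpow_nonneg hS0.le _)]
    rw [← Real.rpow_mul hS0.le, div_mul_cancel₀ _ hp0.ne']
    rw [← two_mul, hS2, Real.mul_rpow (by norm_num) hn0.le]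
    have hy : (0:ℝ) < ((n:ℝ) + 1) ^ (p - 1) := Real.rpow_pos_of_pos hn0 _
    have h2p : (0:ℝ) < (2:ℝ) ^ (p - 1) := Real.rpow_pos_of_pos two_pos _
    rw [div_eq_iff (by positivity : (0:ℝ) < (2:ℝ) ^ (p-1) * ((n:ℝ)+1) ^ (p-1)).ne']
    have e1 : ((n:ℝ) + 1) ^ (1 - p) * ((n:ℝ) + 1) ^ (p - 1) = 1 := by
      rw [← Real.rpow_add hn0]; norm_num
    have e2 : 2 * (2:ℝ) ^ (p - 1) = 2 ^ p := by
      rw [show (2:ℝ) * 2 ^ (p - 1) = 2 ^ (1:ℝ) * 2 ^ (p - 1) by rw [Real.rpow_one],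
        ← Real.rpow_add two_pos]
      norm_num
    have final : 2 * ((n:ℝ) + 1) ^ (1 - p) * ((2:ℝ) ^ (p - 1) * ((n:ℝ) + 1) ^ (p - 1)) = 2 ^ p :=
      calc 2 * ((n:ℝ) + 1) ^ (1 - p) * ((2:ℝ) ^ (p - 1) * ((n:ℝ) + 1) ^ (p - 1))
          = (2 * (2:ℝ) ^ (p - 1)) * (((n:ℝ) + 1) ^ (1 - p) * ((n:ℝ) + 1) ^ (p - 1)) := by ring
        _ = 2 ^ p := by rw [e1, e2, mul_one]
    linarith [final]

private lemma telescope_Ioc (g : ℕ → ℝ) : ∀ (a b : ℕ), a ≤ b →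
    ∑ m ∈ Finset.Ioc a b, (g m - g (m - 1)) = g b - g a := by
  intro a b hab
  induction b, hab using Nat.le_induction with
  | base => simp
  | succ b hab ih =>
    rw [Finset.sum_Ioc_succ_top (by omega : a ≤ b) _, ih]
    have h1 : b + 1 - 1 = b := by omega
    rw [h1]
    ring

/-- Theorem `Esistenza`. Let `T ≥ 2`, `p > 1`, `f : ℤ[1,T] × ℝ → ℝ`
continuous, `F k ξ = ∫_0^ξ f(k,s) ds`, and `κ` as in the paper. If there is `ε > 0` with
`(∑_{k=1}^T max_{|ξ| ≤ ε} F k ξ) / ε^p < κ^p / p`, then the problem `(D_f)` has a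
solution `u` with `‖u‖_∞ < ε`. -/
theorem discrete_pLaplacian_existence
    (T : ℕ) (hT : 2 ≤ T) (p : ℝ) (hp : 1 < p)
    (f : ℕ → ℝ → ℝ) (hf : ∀ k ∈ Finset.Icc 1 T, Continuous (f k))
    (φ : ℝ → ℝ) (hφ : ∀ s : ℝ, φ s = |s| ^ (p - 2) * s)
    (F : ℕ → ℝ → ℝ) (hF : ∀ k : ℕ, ∀ ξ : ℝ, F k ξ = ∫ s in (0:ℝ)..ξ, f k s)
    (κ : ℝ)
    (hκ : κ = if Even T
      then ((2 / (T : ℝ)) ^ (p - 1) + (2 / ((T : ℝ) + 2)) ^ (p - 1)) ^ (1 / p)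
      else 2 / ((T : ℝ) + 1) ^ ((p - 1) / p))
    (ε : ℝ) (hε : 0 < ε)
    (hcond : (∑ k ∈ Finset.Icc 1 T, sSup (F k '' Set.Icc (-ε) ε)) / ε ^ p < κ ^ p / p) :
    ∃ u : ℕ → ℝ, u 0 = 0 ∧ u (T + 1) = 0 ∧
      (∀ k ∈ Finset.Icc 1 T,
        -(φ (u (k + 1) - u k) - φ (u k - u (k - 1))) = f k (u k)) ∧
      (∀ k ∈ Finset.Icc 1 T, |u k| < ε) := by
  classical
  have hp0 : (0:ℝ) < p := by linarith
  have hpne : p ≠ 0 := hp0.ne'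
  -- the extension operator
  set ext : (Fin T → ℝ) → ℕ → ℝ :=
    fun v k => if h : k - 1 < T ∧ 1 ≤ k then v ⟨k - 1, h.1⟩ else 0 with hext_def
  have hext0 : ∀ v, ext v 0 = 0 := by
    intro v; rw [hext_def]; simp
  have hextT : ∀ v, ext v (T + 1) = 0 := by
    intro v; rw [hext_def]
    have : ¬(T + 1 - 1 < T ∧ 1 ≤ T + 1) := by omega
    simp [this]
  have hextk : ∀ v (k : ℕ) (hkT : k - 1 < T) (hk1 : 1 ≤ k), ext v k = v ⟨k - 1, hkT⟩ := by
    intro v k hkT hk1; rw [hext_def]; exact dif_pos ⟨hkT, hk1⟩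
  have hvi : ∀ (v : Fin T → ℝ) (i : Fin T), ext v ((i : ℕ) + 1) = v i := by
    intro v i
    rw [hextk v ((i : ℕ) + 1) (by simpa using i.2) (by omega)]
    congr 1
  have hext_zero : ∀ m, ext 0 m = 0 := by
    intro m; rw [hext_def]
    by_cases h : m - 1 < T ∧ 1 ≤ m
    · simp [h]
    · simp [h]
  have hupdate : ∀ (v : Fin T → ℝ) (i : Fin T) (t : ℝ) (m : ℕ),
      ext (Function.update v i t) m = if m = (i : ℕ) + 1 then t else ext v m := by
    intro v i t m
    by_cases hm : m = (i : ℕ) + 1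
    · rw [if_pos hm, hm, hvi, Function.update_self]
    · rw [if_neg hm, hext_def]
      by_cases h : m - 1 < T ∧ 1 ≤ m
      · simp only [dif_pos h]
        apply Function.update_of_ne
        intro hcon
        apply hm
        have := congrArg (fun x : Fin T => (x : ℕ)) hcon
        simp at this
        omega
      · simp only [dif_neg h]
  -- energy functionals
  set Φ : (Fin T → ℝ) → ℝ :=
    fun v => ∑ m ∈ Finset.Ioc 0 (T + 1), |ext v m - ext v (m - 1)| ^ p with hΦ_def
  set Ψ : (Fin T → ℝ) → ℝ := fun v => ∑ m ∈ Finset.Icc 1 T, F m (ext v m) with hΨ_def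
  set J : (Fin T → ℝ) → ℝ := fun v => Φ v / p - Ψ v with hJ_def
  -- continuity
  have hrpow : Continuous fun x : ℝ => |x| ^ p := by
    have h1 : ∀ x : ℝ, ContinuousAt (fun y : ℝ => y ^ p) x := fun x =>
      Real.continuousAt_rpow_const x p (Or.inr hp0.le)
    exact (continuous_iff_continuousAt.mpr h1).comp continuous_abs
  have hextc : ∀ m, Continuous fun v : Fin T → ℝ => ext v m := by
    intro m; rw [hext_def]
    by_cases h : m - 1 < T ∧ 1 ≤ m
    · simp only [dif_pos h]; exact continuous_apply _
    · simp only [dif_neg h]; exact continuous_const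
  have hΦc : Continuous Φ := by
    rw [hΦ_def]
    apply continuous_finset_sum
    intro m _
    exact hrpow.comp ((hextc m).sub (hextc (m - 1)))
  have hFder : ∀ k ∈ Finset.Icc 1 T, ∀ x : ℝ, HasDerivAt (F k) (f k x) x := by
    intro k hk x
    have hfc := hf k hk
    have h1 : HasDerivAt (fun ξ : ℝ => ∫ s in (0:ℝ)..ξ, f k s) (f k x) x :=
      intervalIntegral.integral_hasDerivAt_right (hfc.intervalIntegrable 0 x)
        (hfc.stronglyMeasurableAtFilter _ _) hfc.continuousAt
    have hFk : F k = fun ξ : ℝ => ∫ s in (0:ℝ)..ξ, f k s := funext (hF k)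
    rw [hFk]; exact h1
  have hFc : ∀ k ∈ Finset.Icc 1 T, Continuous (F k) := fun k hk =>
    continuous_iff_continuousAt.mpr fun x => (hFder k hk x).continuousAt
  have hΨc : Continuous Ψ := by
    rw [hΨ_def]
    apply continuous_finset_sum
    intro m hm
    exact (hFc m hm).comp (hextc m)
  have hJc : Continuous J := by
    rw [hJ_def]
    exact ((hΦc.div_const p).sub hΨc)
  -- positivity of κ
  have hT0 : (0:ℝ) < (T : ℝ) := by
    have : 0 < T := by omega
    exact_mod_cast this
  have hκpos : 0 < κ := by
    rw [hκ]; split_ifs with hTe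
    · apply Real.rpow_pos_of_pos
      have h1 : (0:ℝ) < (2 / (T : ℝ)) ^ (p - 1) := Real.rpow_pos_of_pos (by positivity) _
      have h2 : (0:ℝ) < (2 / ((T : ℝ) + 2)) ^ (p - 1) := Real.rpow_pos_of_pos (by positivity) _
      linarith
    · have : (0:ℝ) < ((T : ℝ) + 1) ^ ((p - 1) / p) := Real.rpow_pos_of_pos (by positivity) _
      positivity
  set r : ℝ := κ ^ p * ε ^ p with hr_def
  have hκp : (0:ℝ) < κ ^ p := Real.rpow_pos_of_pos hκpos p
  have hεp : (0:ℝ) < ε ^ p := Real.rpow_pos_of_pos hε p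
  have hr0 : 0 < r := mul_pos hκp hεp
  -- the discrete Sobolev inequality
  have hsob : ∀ (v : Fin T → ℝ) (k : ℕ), 1 ≤ k → k ≤ T → |ext v k| ^ p * κ ^ p ≤ Φ v := by
    intro v k hk1 hk2
    have hk0 : (0:ℝ) < (k : ℝ) := by exact_mod_cast (by omega : 0 < k)
    have hTk0 : (0:ℝ) < (T : ℝ) + 1 - k := by
      have : (k : ℝ) ≤ (T : ℝ) := by exact_mod_cast hk2
      linarith
    have ht1 : ext v k = ∑ m ∈ Finset.Ioc 0 k, (ext v m - ext v (m - 1)) := by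
      rw [telescope_Ioc (ext v) 0 k (by omega), hext0]; ring
    have ht2 : -ext v k = ∑ m ∈ Finset.Ioc k (T + 1), (ext v m - ext v (m - 1)) := by
      rw [telescope_Ioc (ext v) k (T + 1) (by omega), hextT]; ring
    have habs1 : |ext v k| ≤ ∑ m ∈ Finset.Ioc 0 k, |ext v m - ext v (m - 1)| := by
      rw [ht1]; exact Finset.abs_sum_le_sum_abs _ _
    have habs2 : |ext v k| ≤ ∑ m ∈ Finset.Ioc k (T + 1), |ext v m - ext v (m - 1)| := by
      rw [← abs_neg, ht2]; exact Finset.abs_sum_le_sum_abs _ _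
    have hpow1 : |ext v k| ^ p ≤ (k : ℝ) ^ (p - 1) *
        ∑ m ∈ Finset.Ioc 0 k, |ext v m - ext v (m - 1)| ^ p := by
      refine le_trans (Real.rpow_le_rpow (abs_nonneg _) habs1 hp0.le) ?_
      have := sum_pow_le hp (Finset.Ioc 0 k) (fun m => |ext v m - ext v (m - 1)|)
        (fun m _ => abs_nonneg _)
      simpa [Nat.card_Ioc] using this
    have hpow2 : |ext v k| ^ p ≤ ((T : ℝ) + 1 - k) ^ (p - 1) *
        ∑ m ∈ Finset.Ioc k (T + 1), |ext v m - ext v (m - 1)| ^ p := by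
      refine le_trans (Real.rpow_le_rpow (abs_nonneg _) habs2 hp0.le) ?_
      have h1 := sum_pow_le hp (Finset.Ioc k (T + 1)) (fun m => |ext v m - ext v (m - 1)|)
        (fun m _ => abs_nonneg _)
      have hcard : ((Finset.Ioc k (T + 1)).card : ℝ) = (T : ℝ) + 1 - k := by
        rw [Nat.card_Ioc]
        push_cast [Nat.cast_sub (by omega : k ≤ T + 1)]
        ring
      rw [hcard] at h1
      exact h1
    set S1 : ℝ := ∑ m ∈ Finset.Ioc 0 k, |ext v m - ext v (m - 1)| ^ p with hS1
    set S2 : ℝ := ∑ m ∈ Finset.Ioc k (T + 1), |ext v m - ext v (m - 1)| ^ p with hS2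
    have g1 : |ext v k| ^ p * (k : ℝ) ^ (1 - p) ≤ S1 := by
      have e : (k : ℝ) ^ (1 - p) * ((k : ℝ) ^ (p - 1) * S1) = S1 := by
        rw [← mul_assoc, ← Real.rpow_add hk0]
        norm_num
      calc |ext v k| ^ p * (k : ℝ) ^ (1 - p) = (k : ℝ) ^ (1 - p) * |ext v k| ^ p := by ring
        _ ≤ (k : ℝ) ^ (1 - p) * ((k : ℝ) ^ (p - 1) * S1) :=
            mul_le_mul_of_nonneg_left hpow1 (Real.rpow_nonneg hk0.le _)
        _ = S1 := e
    have g2 : |ext v k| ^ p * ((T : ℝ) + 1 - k) ^ (1 - p) ≤ S2 := by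
      have e : ((T : ℝ) + 1 - k) ^ (1 - p) * (((T : ℝ) + 1 - k) ^ (p - 1) * S2) = S2 := by
        rw [← mul_assoc, ← Real.rpow_add hTk0]
        norm_num
      calc |ext v k| ^ p * ((T : ℝ) + 1 - k) ^ (1 - p)
          = ((T : ℝ) + 1 - k) ^ (1 - p) * |ext v k| ^ p := by ring
        _ ≤ ((T : ℝ) + 1 - k) ^ (1 - p) * (((T : ℝ) + 1 - k) ^ (p - 1) * S2) :=
            mul_le_mul_of_nonneg_left hpow2 (Real.rpow_nonneg hTk0.le _)
        _ = S2 := e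
    have hsplit : S1 + S2 = Φ v := by
      rw [hS1, hS2, hΦ_def]
      exact Finset.sum_Ioc_consecutive _ (by omega : 0 ≤ k) (by omega : k ≤ T + 1)
    have hkap : κ ^ p ≤ (k : ℝ) ^ (1 - p) + ((T : ℝ) + 1 - k) ^ (1 - p) := by
      rw [hκ]; exact kappa_min hT hp hk1 hk2
    calc |ext v k| ^ p * κ ^ p
        ≤ |ext v k| ^ p * ((k : ℝ) ^ (1 - p) + ((T : ℝ) + 1 - k) ^ (1 - p)) :=
          mul_le_mul_of_nonneg_left hkap (Real.rpow_nonneg (abs_nonneg _) _)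
      _ = |ext v k| ^ p * (k : ℝ) ^ (1 - p) + |ext v k| ^ p * ((T : ℝ) + 1 - k) ^ (1 - p) := by
          ring
      _ ≤ S1 + S2 := add_le_add g1 g2
      _ = Φ v := hsplit
  -- bounds on the ball
  have hball : ∀ v : Fin T → ℝ, Φ v ≤ r → ∀ k, 1 ≤ k → k ≤ T → |ext v k| ≤ ε := by
    intro v hv k hk1 hk2
    by_contra hcon
    push_neg at hcon
    have h1 := hsob v k hk1 hk2
    have h2 : ε ^ p < |ext v k| ^ p := Real.rpow_lt_rpow hε.le hcon hp0
    nlinarith [mul_lt_mul_of_pos_right h2 hκp]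
  have hballs : ∀ v : Fin T → ℝ, Φ v < r → ∀ k, 1 ≤ k → k ≤ T → |ext v k| < ε := by
    intro v hv k hk1 hk2
    by_contra hcon
    push_neg at hcon
    have h1 := hsob v k hk1 hk2
    have h2 : ε ^ p ≤ |ext v k| ^ p := Real.rpow_le_rpow hε.le hcon hp0.le
    nlinarith [mul_le_mul_of_nonneg_right h2 hκp.le]
  -- compact sublevel set
  set K : Set (Fin T → ℝ) := {v | Φ v ≤ r} with hK_def
  have hKclosed : IsClosed K := isClosed_le hΦc continuous_const
  have hKsub : K ⊆ Metric.closedBall 0 ε := by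
    intro v hv
    rw [Metric.mem_closedBall, dist_zero_right]
    rw [pi_norm_le_iff_of_nonneg hε.le]
    intro i
    have h1 := hball v hv ((i : ℕ) + 1) (by omega) (by omega)
    rw [hvi] at h1
    simpa using h1
  have hKcompact : IsCompact K :=
    (isCompact_closedBall (0 : Fin T → ℝ) ε).of_isClosed_subset hKclosed hKsub
  have hΦ0 : Φ (0 : Fin T → ℝ) = 0 := by
    rw [hΦ_def]
    apply Finset.sum_eq_zero
    intro m _
    rw [hext_zero, hext_zero]
    simp [Real.zero_rpow hpne]
  have hK0 : (0 : Fin T → ℝ) ∈ K := by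
    rw [hK_def]
    simp only [Set.mem_setOf_eq, hΦ0]
    exact hr0.le
  obtain ⟨v, hvK, hvmin⟩ := hKcompact.exists_isMinOn ⟨0, hK0⟩ hJc.continuousOn
  have hvKle : Φ v ≤ r := hvK
  -- value at zero
  have hF0 : ∀ k, F k 0 = 0 := by
    intro k
    rw [hF k 0, intervalIntegral.integral_same]
  have hJ0 : J (0 : Fin T → ℝ) = 0 := by
    rw [hJ_def]
    simp only [hΦ0, hΨ_def]
    rw [Finset.sum_congr rfl fun m _ => by rw [hext_zero, hF0]]
    simp
  -- supremum bounds
  have hM : ∀ k ∈ Finset.Icc 1 T, ∀ x : ℝ, |x| ≤ ε →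
      F k x ≤ sSup (F k '' Set.Icc (-ε) ε) := by
    intro k hk x hx
    apply le_csSup
    · exact (isCompact_Icc.image_of_continuousOn (hFc k hk).continuousOn).bddAbove
    · refine ⟨x, ?_, rfl⟩
      rw [Set.mem_Icc]
      obtain ⟨h1, h2⟩ := abs_le.mp hx
      exact ⟨h1, h2⟩
  have hMsum : ∑ k ∈ Finset.Icc 1 T, sSup (F k '' Set.Icc (-ε) ε) < r / p := by
    rw [div_lt_div_iff₀ hεp hp0] at hcond
    rw [lt_div_iff₀ hp0, hr_def]
    linarith
  -- the minimizer is interior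
  have hΦv : Φ v < r := by
    rcases lt_or_eq_of_le hvKle with h | h
    · exact h
    · exfalso
      have h1 : J v ≤ J 0 := hvmin hK0
      have h2 : Ψ v ≤ ∑ k ∈ Finset.Icc 1 T, sSup (F k '' Set.Icc (-ε) ε) := by
        rw [hΨ_def]
        apply Finset.sum_le_sum
        intro k hk
        obtain ⟨hk1, hk2⟩ := Finset.mem_Icc.mp hk
        exact hM k hk _ (hball v hvKle k hk1 hk2)
      have h3 : J v = r / p - Ψ v := by simp only [hJ_def]; rw [h]
      rw [hJ0] at h1
      have h5 : Ψ v < r / p := lt_of_le_of_lt h2 hMsum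
      have h1' : r / p - Ψ v ≤ 0 := by rw [← h3]; exact h1
      have h6 : r / p ≤ Ψ v := sub_nonpos.mp h1'
      exact absurd h5 (not_lt.mpr h6)
  -- strict bound on the solution
  have hfinal2 : ∀ k ∈ Finset.Icc 1 T, |ext v k| < ε := by
    intro k hk
    obtain ⟨hk1, hk2⟩ := Finset.mem_Icc.mp hk
    exact hballs v hΦv k hk1 hk2
  -- local minimality
  have hlocmin : IsLocalMin J v := by
    have hopen : IsOpen {w : Fin T → ℝ | Φ w < r} := isOpen_lt hΦc continuous_const
    have hnhds : {w : Fin T → ℝ | Φ w < r} ∈ nhds v := hopen.mem_nhds hΦv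
    refine Filter.eventually_of_mem hnhds fun w hw => hvmin ?_
    have hw' : Φ w < r := hw
    show w ∈ K
    rw [hK_def]
    exact le_of_lt hw'
  -- Euler-Lagrange equations
  refine ⟨ext v, hext0 v, hextT v, ?_, hfinal2⟩
  intro k hk
  obtain ⟨hk1, hk2⟩ := Finset.mem_Icc.mp hk
  set i : Fin T := ⟨k - 1, by omega⟩ with hi_def
  have hik : (i : ℕ) + 1 = k := by
    rw [hi_def]
    simp
    omega
  have hut : ext v k = v i := by rw [← hik, hvi]
  set upd : ℝ → (Fin T → ℝ) := fun t => Function.update v i t with hupd_def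
  have hupdc : Continuous upd := by
    rw [hupd_def]
    apply continuous_pi
    intro j
    simp only [Function.update_apply]
    by_cases hj : j = i
    · simp only [if_pos hj]; exact continuous_id
    · simp only [if_neg hj]; exact continuous_const
  have hupd0 : upd (v i) = v := by rw [hupd_def]; exact Function.update_eq_self i v
  have hglocmin : IsLocalMin (fun t => J (upd t)) (v i) := by
    have htend : Filter.Tendsto upd (nhds (v i)) (nhds v) := by
      have := hupdc.continuousAt (x := v i)
      rwa [ContinuousAt, hupd0] at this
    have hev := htend.eventually hlocmin
    exact hev.mono fun t ht => by simpa [hupd0] using ht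
  have hrwu : ∀ (t : ℝ) (m : ℕ), ext (upd t) m = if m = k then t else ext v m := by
    intro t m
    rw [hupd_def]
    rw [hupdate v i t m, hik]
  set d : ℕ → ℝ := fun m =>
    if m = k then p * |ext v k - ext v (k - 1)| ^ (p - 2) * (ext v k - ext v (k - 1))
    else if m = k + 1 then -(p * |ext v (k + 1) - ext v k| ^ (p - 2) * (ext v (k + 1) - ext v k))
    else 0 with hd_def
  have hA : ∀ m ∈ Finset.Ioc 0 (T + 1),
      HasDerivAt (fun t => |ext (upd t) m - ext (upd t) (m - 1)| ^ p) (d m) (v i) := by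
    intro m hm
    obtain ⟨hm0, hmT⟩ := Finset.mem_Ioc.mp hm
    by_cases hmk : m = k
    · have hm1k : ¬(m - 1 = k) := by omega
      have heq : (fun t => |ext (upd t) m - ext (upd t) (m - 1)| ^ p)
          = fun t => |t - ext v (m - 1)| ^ p := by
        funext t
        rw [hrwu, hrwu, if_pos hmk, if_neg hm1k]
      rw [heq]
      have hder := (abs_rpow_hasDerivAt hp (v i - ext v (m - 1))).comp (v i)
        ((hasDerivAt_id (v i)).sub_const (ext v (m - 1)))
      have hdv : d m = p * |v i - ext v (m - 1)| ^ (p - 2) * (v i - ext v (m - 1)) * 1 := by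
        rw [hd_def]
        simp only [if_pos hmk]
        rw [hmk, hut]
        ring
      rw [hdv]
      exact hder
    · by_cases hmk1 : m = k + 1
      · have hm1k : m - 1 = k := by omega
        have heq : (fun t => |ext (upd t) m - ext (upd t) (m - 1)| ^ p)
            = fun t => |ext v m - t| ^ p := by
          funext t
          rw [hrwu, hrwu, if_neg hmk, if_pos hm1k]
        rw [heq]
        have hder := (abs_rpow_hasDerivAt hp (ext v m - v i)).comp (v i)
          ((hasDerivAt_id (v i)).const_sub (ext v m))
        have hdv : d m = p * |ext v m - v i| ^ (p - 2) * (ext v m - v i) * (-1) := by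
          rw [hd_def]
          simp only [if_neg hmk, if_pos hmk1]
          rw [hmk1, hut]
          ring
        rw [hdv]
        exact hder
      · have hm1k : ¬(m - 1 = k) := by omega
        have heq : (fun t => |ext (upd t) m - ext (upd t) (m - 1)| ^ p)
            = fun _ => |ext v m - ext v (m - 1)| ^ p := by
          funext t
          rw [hrwu, hrwu, if_neg hmk, if_neg hm1k]
        rw [heq]
        have hdv : d m = 0 := by rw [hd_def]; simp [hmk, hmk1]
        rw [hdv]
        exact hasDerivAt_const _ _
  have hB : ∀ m ∈ Finset.Icc 1 T,
      HasDerivAt (fun t => F m (ext (upd t) m)) (if m = k then f k (v i) else 0) (v i) := by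
    intro m hm
    by_cases hmk : m = k
    · have heq : (fun t => F m (ext (upd t) m)) = fun t => F m t := by
        funext t
        rw [hrwu, if_pos hmk]
      rw [heq, if_pos hmk, hmk]
      exact hFder k hk (v i)
    · have heq : (fun t => F m (ext (upd t) m)) = fun _ => F m (ext v m) := by
        funext t
        rw [hrwu, if_neg hmk]
      rw [heq, if_neg hmk]
      exact hasDerivAt_const _ _
  have hsum : HasDerivAt (fun t => J (upd t))
      ((∑ m ∈ Finset.Ioc 0 (T + 1), d m) / p
        - ∑ m ∈ Finset.Icc 1 T, (if m = k then f k (v i) else 0)) (v i) := by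
    have h1 : HasDerivAt (fun t => Φ (upd t)) (∑ m ∈ Finset.Ioc 0 (T + 1), d m) (v i) := by
      rw [hΦ_def]
      exact HasDerivAt.fun_sum hA
    have h2 : HasDerivAt (fun t => Ψ (upd t))
        (∑ m ∈ Finset.Icc 1 T, (if m = k then f k (v i) else 0)) (v i) := by
      rw [hΨ_def]
      exact HasDerivAt.fun_sum hB
    rw [hJ_def]
    exact (h1.div_const p).sub h2
  have hzero := hglocmin.hasDerivAt_eq_zero hsum
  have hd_sum : ∑ m ∈ Finset.Ioc 0 (T + 1), d m = d k + d (k + 1) := by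
    have hsub : ({k, k + 1} : Finset ℕ) ⊆ Finset.Ioc 0 (T + 1) := by
      intro x hx
      rw [Finset.mem_insert, Finset.mem_singleton] at hx
      rw [Finset.mem_Ioc]
      rcases hx with rfl | rfl <;> omega
    rw [← Finset.sum_subset hsub]
    · rw [Finset.sum_pair (by omega : k ≠ k + 1)]
    · intro x _ hnx
      rw [Finset.mem_insert, Finset.mem_singleton] at hnx
      push_neg at hnx
      rw [hd_def]
      simp [hnx.1, hnx.2]
  have hB_sum : ∑ m ∈ Finset.Icc 1 T, (if m = k then f k (v i) else 0) = f k (v i) := by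
    rw [Finset.sum_ite_eq' (Finset.Icc 1 T) k fun _ => f k (v i)]
    rw [if_pos hk]
  rw [hd_sum, hB_sum] at hzero
  have hdk : d k = p * |ext v k - ext v (k - 1)| ^ (p - 2) * (ext v k - ext v (k - 1)) := by
    simp [hd_def]
  have hdk1 : d (k + 1)
      = -(p * |ext v (k + 1) - ext v k| ^ (p - 2) * (ext v (k + 1) - ext v k)) := by
    have hne : ¬(k + 1 = k) := by omega
    simp [hd_def, hne]
  rw [hdk, hdk1] at hzero
  rw [hφ, hφ, hut]
  have hexp : (p * |ext v k - ext v (k - 1)| ^ (p - 2) * (ext v k - ext v (k - 1))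
      + -(p * |ext v (k + 1) - ext v k| ^ (p - 2) * (ext v (k + 1) - ext v k)))
      = p * (|ext v k - ext v (k - 1)| ^ (p - 2) * (ext v k - ext v (k - 1))
        - |ext v (k + 1) - ext v k| ^ (p - 2) * (ext v (k + 1) - ext v k)) := by ring
  rw [hexp] at hzero
  rw [mul_div_cancel_left₀ _ hpne] at hzero
  rw [hut] at hzero
  linarith [hzero]
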